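/- Let R be a commutative noetherian ring, Φ ⊆ Spec R, and n ≥ 0. Then the class C^n_Φ of modules admitting an injective copresentation of length n by injectives with associated primes in Φ is closed under n-kernels: if 0 → M → X_0 → X_1 → ⋯ → X_n is exact with each X_i ∈ C^n_Φ, then M ∈ C^n_Φ. -/

import Mathlib

/-- The set of associated primes, as a subset of the prime spectrum. -/
def assSet (R : Type) [CommRing R] (M : Type) [AddCommGroup M] [Module R M] :
    Set (PrimeSpectrum R) :=
  { p | p.asIdeal ∈ associatedPrimes R M }

/-- Membership in the class `C^n_Φ`: an `R`-module `X` belongs to `C^n_Φ` if there is an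
exact sequence `0 → X → I^0 → I^1 → ⋯ → I^n` with every `I^i` (for `0 ≤ i ≤ n`) injective
and with associated primes contained in `Φ`. -/
def CMem (R : Type) [CommRing R] (Φ : Set (PrimeSpectrum R)) (n : ℕ)
    (M : Type) [AddCommGroup M] [Module R M] : Prop :=
  ∃ (I : ℕ → Type) (_ : ∀ i, AddCommGroup (I i)) (_ : ∀ i, Module R (I i))
    (d : ∀ i, I i →ₗ[R] I (i + 1)) (ε : M →ₗ[R] I 0),
    Function.Injective ε ∧
    (0 < n → Function.Exact ε (d 0)) ∧
    (∀ i, i + 2 ≤ n → Function.Exact (d i) (d (i + 1))) ∧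
    (∀ i ≤ n, Module.Injective R (I i)) ∧
    (∀ i ≤ n, assSet R (I i) ⊆ Φ)

section Aux

/-! ### Auxiliary material -/

/-- If `0 → A → B → C` is exact then every associated prime of `B` is an associated
prime of `A` or of `C`. -/
lemma isAssociatedPrime_of_exact {R : Type} [CommRing R] [IsNoetherianRing R] {A B C : Type}
    [AddCommGroup A] [AddCommGroup B] [AddCommGroup C] [Module R A] [Module R B] [Module R C]
    (i : A →ₗ[R] B) (p : B →ₗ[R] C) (hi : Function.Injective i)
    (hexact : Function.Exact i p)
    {P : Ideal R} (h : IsAssociatedPrime P B) :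
    IsAssociatedPrime P A ∨ IsAssociatedPrime P C := by
  obtain ⟨hP, x, hx⟩ := isAssociatedPrime_iff.mp h
  have hmem : ∀ z : R, z ∈ P ↔ z • x = 0 := fun z => by
    rw [hx, Submodule.mem_colon_singleton, Submodule.mem_bot]
  by_cases hc : ∃ r : R, r • x ∈ Set.range i ∧ r • x ≠ 0
  · obtain ⟨r, ⟨a, ha⟩, hne⟩ := hc
    left
    refine isAssociatedPrime_iff.mpr ⟨hP, a, ?_⟩
    ext z
    rw [Submodule.mem_colon_singleton, Submodule.mem_bot]
    constructor
    · intro hz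
      apply hi
      rw [map_smul, ha, map_zero, smul_comm z r, (hmem z).mp hz, smul_zero]
    · intro hz
      have h1 : (z * r) • x = 0 := by
        rw [mul_smul, ← ha, ← map_smul, hz, map_zero]
      rcases hP.mem_or_mem ((hmem (z * r)).mpr h1) with h2 | h2
      · exact h2
      · exact absurd ((hmem r).mp h2) hne
  · push_neg at hc
    right
    refine isAssociatedPrime_iff.mpr ⟨hP, p x, ?_⟩
    ext z
    rw [Submodule.mem_colon_singleton, Submodule.mem_bot]
    constructor
    · intro hz
      rw [← map_smul, (hmem z).mp hz, map_zero]
    · intro hz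
      have hr : z • x ∈ Set.range i := (hexact (z • x)).mp (by rw [map_smul, hz])
      exact (hmem z).mpr (hc _ hr)

lemma assSet_prod_subset {R : Type} [CommRing R] [IsNoetherianRing R] {P Q : Type}
    [AddCommGroup P] [AddCommGroup Q] [Module R P] [Module R Q] :
    assSet R (P × Q) ⊆ assSet R P ∪ assSet R Q := by
  intro q hq
  rcases isAssociatedPrime_of_exact (LinearMap.inl R P Q) (LinearMap.snd R P Q)
      LinearMap.inl_injective Function.Exact.inl_snd hq with h | h
  · exact Or.inl h
  · exact Or.inr h

lemma Module.Injective.prodMem {R : Type} [CommRing R] {P Q : Type}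
    [AddCommGroup P] [AddCommGroup Q] [Module R P] [Module R Q]
    (hP : Module.Injective R P) (hQ : Module.Injective R Q) :
    Module.Injective R (P × Q) := by
  refine ⟨fun X Y _ _ _ _ f hf g => ?_⟩
  obtain ⟨h1, hh1⟩ := hP.out f hf ((LinearMap.fst R P Q).comp g)
  obtain ⟨h2, hh2⟩ := hQ.out f hf ((LinearMap.snd R P Q).comp g)
  refine ⟨h1.prod h2, fun x => ?_⟩
  have e1 : h1 (f x) = (g x).1 := hh1 x
  have e2 : h2 (f x) = (g x).2 := hh2 x
  show (h1 (f x), h2 (f x)) = g x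
  rw [e1, e2]

/-! ### Splicing an embedding with a coresolution of the cokernel -/

def spliceFam (I : Type) (J : ℕ → Type) : ℕ → Type
  | 0 => I
  | k + 1 => J k

instance spliceAcg (I : Type) [hI : AddCommGroup I] (J : ℕ → Type)
    [hJ : ∀ i, AddCommGroup (J i)] : ∀ k, AddCommGroup (spliceFam I J k)
  | 0 => hI
  | _ + 1 => hJ _

instance spliceMod (R : Type) [CommRing R] (I : Type) [AddCommGroup I] [mI : Module R I]
    (J : ℕ → Type) [∀ i, AddCommGroup (J i)] [mJ : ∀ i, Module R (J i)] :
    ∀ k, Module R (spliceFam I J k)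
  | 0 => mI
  | _ + 1 => mJ _

def spliceMap (R : Type) [CommRing R] (I : Type) [AddCommGroup I] [Module R I]
    (J : ℕ → Type) [∀ i, AddCommGroup (J i)] [∀ i, Module R (J i)]
    (f0 : I →ₗ[R] J 0) (dJ : ∀ i, J i →ₗ[R] J (i + 1)) :
    ∀ k, spliceFam I J k →ₗ[R] spliceFam I J (k + 1)
  | 0 => f0
  | k + 1 => dJ k

/-! ### Basic operations on `CMem` -/

variable {R : Type} [CommRing R] {Φ : Set (PrimeSpectrum R)}

lemma cMem_mono {n m : ℕ} {M : Type} [AddCommGroup M] [Module R M]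
    (h : CMem R Φ n M) (hmn : m ≤ n) : CMem R Φ m M := by
  obtain ⟨I, aI, mI, d, ε, h1, h2, h3, h4, h5⟩ := h
  exact ⟨I, aI, mI, d, ε, h1, fun h => h2 (lt_of_lt_of_le h hmn),
    fun i hi => h3 i (le_trans hi hmn),
    fun i hi => h4 i (le_trans hi hmn), fun i hi => h5 i (le_trans hi hmn)⟩

lemma cMem_zero {M I : Type} [AddCommGroup M] [Module R M] [AddCommGroup I] [Module R I]
    (ε : M →ₗ[R] I) (hinj : Function.Injective ε) (hI : Module.Injective R I)
    (hAss : assSet R I ⊆ Φ) : CMem R Φ 0 M :=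
  ⟨fun _ => I, fun _ => inferInstance, fun _ => inferInstance, fun _ => 0, ε, hinj,
    fun h => absurd h (by omega), fun i hi => absurd hi (by omega),
    fun _ _ => hI, fun _ _ => hAss⟩

lemma cMem_embed {n : ℕ} {M : Type} [AddCommGroup M] [Module R M] (h : CMem R Φ n M) :
    ∃ (I : Type) (_ : AddCommGroup I) (_ : Module R I) (ε : M →ₗ[R] I),
      Function.Injective ε ∧ Module.Injective R I ∧ assSet R I ⊆ Φ := by
  obtain ⟨I, aI, mI, d, ε, h1, _, _, h4, h5⟩ := h
  exact ⟨I 0, aI 0, mI 0, ε, h1, h4 0 (Nat.zero_le _), h5 0 (Nat.zero_le _)⟩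

lemma cMem_shift {n : ℕ} {M : Type} [AddCommGroup M] [Module R M]
    (h : CMem R Φ (n + 1) M) :
    ∃ (I : Type) (_ : AddCommGroup I) (_ : Module R I) (ε : M →ₗ[R] I),
      Function.Injective ε ∧ Module.Injective R I ∧ assSet R I ⊆ Φ ∧
      CMem R Φ n (I ⧸ LinearMap.range ε) := by
  obtain ⟨J, aJ, mJ, dJ, ε, hε, h0, hexJ, hInj, hAss⟩ := h
  letI := aJ; letI := mJ
  have hker : LinearMap.ker (dJ 0) = LinearMap.range ε :=
    LinearMap.exact_iff.mp (h0 (Nat.succ_pos n))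
  refine ⟨J 0, inferInstance, inferInstance, ε, hε, hInj 0 (by omega), hAss 0 (by omega), ?_⟩
  refine ⟨fun i => J (i + 1), fun i => inferInstance, fun i => inferInstance,
    fun i => dJ (i + 1),
    Submodule.liftQ _ (dJ 0) (le_of_eq hker.symm), ?_, ?_, ?_, ?_, ?_⟩
  · rw [injective_iff_map_eq_zero]
    intro x hx
    obtain ⟨y, rfl⟩ := Submodule.Quotient.mk_surjective _ x
    rw [Submodule.liftQ_apply] at hx
    rw [Submodule.Quotient.mk_eq_zero, ← hker]
    exact hx
  · intro hn
    rw [LinearMap.exact_iff, Submodule.range_liftQ]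
    exact LinearMap.exact_iff.mp (hexJ 0 (by omega))
  · intro i hi
    exact hexJ (i + 1) (by omega)
  · intro i hi
    exact hInj (i + 1) (by omega)
  · intro i hi
    exact hAss (i + 1) (by omega)

lemma cMem_splice {n : ℕ} {M I : Type} [AddCommGroup M] [Module R M]
    [AddCommGroup I] [Module R I]
    (ε : M →ₗ[R] I) (hinj : Function.Injective ε) (hI : Module.Injective R I)
    (hAss : assSet R I ⊆ Φ) (h : CMem R Φ n (I ⧸ LinearMap.range ε)) :
    CMem R Φ (n + 1) M := by
  obtain ⟨J, aJ, mJ, dJ, εQ, hinjQ, h0Q, hexQ, hInjQ, hAssQ⟩ := h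
  letI := aJ; letI := mJ
  refine ⟨spliceFam I J, fun k => inferInstance, fun k => inferInstance,
    spliceMap R I J (εQ ∘ₗ (LinearMap.range ε).mkQ) dJ, ε, hinj, ?_, ?_, ?_, ?_⟩
  · intro _
    show Function.Exact ε (εQ ∘ₗ (LinearMap.range ε).mkQ)
    rw [LinearMap.exact_iff, LinearMap.ker_comp, LinearMap.ker_eq_bot.mpr hinjQ,
      Submodule.comap_bot, Submodule.ker_mkQ]
  · intro i hi
    match i, hi with
    | 0, hi =>
      show Function.Exact (εQ ∘ₗ (LinearMap.range ε).mkQ) (dJ 0)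
      rw [LinearMap.exact_iff, LinearMap.range_comp, Submodule.range_mkQ, Submodule.map_top]
      exact LinearMap.exact_iff.mp (h0Q (by omega))
    | (j + 1), hi =>
      exact hexQ j (by omega)
  · intro i hi
    match i, hi with
    | 0, _ => exact hI
    | (j + 1), hi => exact hInjQ j (by omega)
  · intro i hi
    match i, hi with
    | 0, _ => exact hAss
    | (j + 1), hi => exact hAssQ j (by omega)

/-! ### Closure under extensions -/

lemma cMem_ext (R : Type) [CommRing R] [IsNoetherianRing R] (Φ : Set (PrimeSpectrum R)) :
    ∀ (n : ℕ) (A B C : Type) [AddCommGroup A] [AddCommGroup B] [AddCommGroup C]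
      [Module R A] [Module R B] [Module R C]
      (i : A →ₗ[R] B) (p : B →ₗ[R] C),
      Function.Injective i → Function.Exact i p → Function.Surjective p →
      CMem R Φ n A → CMem R Φ n C → CMem R Φ n B := by
  intro n
  induction n with
  | zero =>
    intro A B C _ _ _ _ _ _ i p hi hexact hp hA hC
    obtain ⟨IA, aA, mA, εA, hεA, hIA, hAssA⟩ := cMem_embed hA
    obtain ⟨IC, aC, mC, εC, hεC, hIC, hAssC⟩ := cMem_embed hC
    letI := aA; letI := mA; letI := aC; letI := mC
    obtain ⟨α, hα⟩ := hIA.out i hi εA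
    set β : B →ₗ[R] IA × IC := α.prod (εC ∘ₗ p) with hβ
    have hβinj : Function.Injective β := by
      rw [injective_iff_map_eq_zero]
      intro b hb
      have h2 : εC (p b) = 0 := congrArg Prod.snd hb
      have h3 : p b = 0 := hεC (by rw [h2, map_zero])
      obtain ⟨a, rfl⟩ := (hexact b).mp h3
      have h4 : εA a = 0 := by rw [← hα a]; exact congrArg Prod.fst hb
      rw [hεA (by rw [h4, map_zero] : εA a = εA 0), map_zero]
    exact cMem_zero β hβinj (hIA.prodMem hIC)
      (fun q hq => by rcases assSet_prod_subset hq with h | h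
                      exacts [hAssA h, hAssC h])
  | succ m IH =>
    intro A B C _ _ _ _ _ _ i p hi hexact hp hA hC
    obtain ⟨IA, aA, mA, εA, hεA, hIA, hAssA, hA'⟩ := cMem_shift hA
    obtain ⟨IC, aC, mC, εC, hεC, hIC, hAssC, hC'⟩ := cMem_shift hC
    letI := aA; letI := mA; letI := aC; letI := mC
    obtain ⟨α, hα⟩ := hIA.out i hi εA
    set β : B →ₗ[R] IA × IC := α.prod (εC ∘ₗ p) with hβdef
    have hβinj : Function.Injective β := by
      rw [injective_iff_map_eq_zero]
      intro b hb
      have h2 : εC (p b) = 0 := congrArg Prod.snd hb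
      have h3 : p b = 0 := hεC (by rw [h2, map_zero])
      obtain ⟨a, rfl⟩ := (hexact b).mp h3
      have h4 : εA a = 0 := by rw [← hα a]; exact congrArg Prod.fst hb
      rw [hεA (by rw [h4, map_zero] : εA a = εA 0), map_zero]
    -- the induced short exact sequence of cokernels
    have hle1 : LinearMap.range εA ≤
        (LinearMap.range β).comap (LinearMap.inl R IA IC) := by
      rintro x ⟨a, rfl⟩
      refine ⟨i a, ?_⟩
      have hpia : p (i a) = 0 := (hexact (i a)).mpr ⟨a, rfl⟩
      show (α (i a), εC (p (i a))) = (εA a, 0)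
      rw [hα a, hpia, map_zero]
    have hle2 : LinearMap.range β ≤
        (LinearMap.range εC).comap (LinearMap.snd R IA IC) := by
      rintro x ⟨b, rfl⟩
      exact ⟨p b, rfl⟩
    set i' : (IA ⧸ LinearMap.range εA) →ₗ[R] ((IA × IC) ⧸ LinearMap.range β) :=
      Submodule.mapQ _ _ (LinearMap.inl R IA IC) hle1 with hi'def
    set p' : ((IA × IC) ⧸ LinearMap.range β) →ₗ[R] (IC ⧸ LinearMap.range εC) :=
      Submodule.mapQ _ _ (LinearMap.snd R IA IC) hle2 with hp'def
    have hi'inj : Function.Injective i' := by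
      rw [injective_iff_map_eq_zero]
      intro x hx
      obtain ⟨y, rfl⟩ := Submodule.Quotient.mk_surjective _ x
      rw [hi'def, Submodule.mapQ_apply, Submodule.Quotient.mk_eq_zero] at hx
      obtain ⟨b, hb⟩ := hx
      have h2 : εC (p b) = 0 := congrArg Prod.snd hb
      have h3 : p b = 0 := hεC (by rw [h2, map_zero])
      obtain ⟨a, rfl⟩ := (hexact b).mp h3
      have h4 : εA a = y := by rw [← hα a]; exact congrArg Prod.fst hb
      rw [Submodule.Quotient.mk_eq_zero]
      exact ⟨a, h4⟩
    have hexact' : Function.Exact i' p' := by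
      intro y
      obtain ⟨⟨x1, x2⟩, rfl⟩ := Submodule.Quotient.mk_surjective _ y
      constructor
      · intro hy
        rw [hp'def, Submodule.mapQ_apply, Submodule.Quotient.mk_eq_zero] at hy
        obtain ⟨c, hc⟩ := hy
        obtain ⟨b, rfl⟩ := hp c
        refine ⟨Submodule.Quotient.mk (x1 - α b), ?_⟩
        rw [hi'def, Submodule.mapQ_apply]
        rw [← sub_eq_zero, ← Submodule.Quotient.mk_sub, Submodule.Quotient.mk_eq_zero]
        refine ⟨-b, ?_⟩
        show (α (-b), εC (p (-b))) = (x1 - α b, 0) - (x1, x2)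
        rw [map_neg, map_neg, map_neg, hc]
        ext <;> simp
      · rintro ⟨x, hx⟩
        obtain ⟨z, rfl⟩ := Submodule.Quotient.mk_surjective _ x
        rw [← hx, hi'def, Submodule.mapQ_apply, hp'def, Submodule.mapQ_apply]
        rw [Submodule.Quotient.mk_eq_zero]
        exact ⟨0, by simp⟩
    have hp'surj : Function.Surjective p' := by
      intro c
      obtain ⟨z, rfl⟩ := Submodule.Quotient.mk_surjective _ c
      exact ⟨Submodule.Quotient.mk (0, z), by rw [hp'def, Submodule.mapQ_apply]; rfl⟩
    have hB' : CMem R Φ m ((IA × IC) ⧸ LinearMap.range β) :=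
      IH _ _ _ i' p' hi'inj hexact' hp'surj hA' hC'
    exact cMem_splice β hβinj (hIA.prodMem hIC)
      (fun q hq => by rcases assSet_prod_subset hq with h | h
                      exacts [hAssA h, hAssC h]) hB'

/-! ### Main induction -/

lemma cMem_main (R : Type) [CommRing R] [IsNoetherianRing R] (Φ : Set (PrimeSpectrum R)) :
    ∀ (n : ℕ) (M : Type) [AddCommGroup M] [Module R M]
      (X : ℕ → Type) [∀ i, AddCommGroup (X i)] [∀ i, Module R (X i)]
      (f : M →ₗ[R] X 0) (d : ∀ i, X i →ₗ[R] X (i + 1)),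
      Function.Injective f →
      (0 < n → Function.Exact f (d 0)) →
      (∀ i, i + 2 ≤ n → Function.Exact (d i) (d (i + 1))) →
      (∀ i ≤ n, CMem R Φ n (X i)) → CMem R Φ n M := by
  intro n
  induction n with
  | zero =>
    intro M _ _ X _ _ f d hf h0 hex hX
    obtain ⟨I, aI, mI, ε, hε, hIinj, hIass⟩ := cMem_embed (hX 0 le_rfl)
    letI := aI; letI := mI
    exact cMem_zero (ε ∘ₗ f) (hε.comp hf) hIinj hIass
  | succ m IH =>
    intro M _ _ X _ _ f d hf h0 hex hX
    obtain ⟨I, aI, mI, ε0, hε0, hIinj, hIass, hC⟩ := cMem_shift (hX 0 (by omega))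
    letI := aI; letI := mI
    have hkerd0 : LinearMap.ker (d 0) = LinearMap.range f :=
      LinearMap.exact_iff.mp (h0 (by omega))
    -- K := X 0 / M, with its embedding into X 1
    set f' : (X 0 ⧸ LinearMap.range f) →ₗ[R] X 1 :=
      Submodule.liftQ _ (d 0) (le_of_eq hkerd0.symm) with hf'def
    have hf'inj : Function.Injective f' := by
      rw [injective_iff_map_eq_zero]
      intro x hx
      obtain ⟨y, rfl⟩ := Submodule.Quotient.mk_surjective _ x
      rw [hf'def, Submodule.liftQ_apply] at hx
      rw [Submodule.Quotient.mk_eq_zero, ← hkerd0]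
      exact hx
    have hK : CMem R Φ m (X 0 ⧸ LinearMap.range f) := by
      refine IH _ (fun i => X (i + 1)) f' (fun i => d (i + 1)) hf'inj ?_ ?_ ?_
      · intro hm
        rw [LinearMap.exact_iff, hf'def, Submodule.range_liftQ]
        exact LinearMap.exact_iff.mp (hex 0 (by omega))
      · intro i hi
        exact hex (i + 1) (by omega)
      · intro i hi
        exact cMem_mono (hX (i + 1) (by omega)) (by omega)
    -- the short exact sequence K → I/M → I/X0
    have hle1 : LinearMap.range f ≤
        (LinearMap.range (ε0 ∘ₗ f)).comap ε0 := by
      rintro x ⟨a, rfl⟩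
      exact ⟨a, rfl⟩
    have hle2 : LinearMap.range (ε0 ∘ₗ f) ≤
        (LinearMap.range ε0).comap LinearMap.id := by
      rintro x ⟨a, rfl⟩
      exact ⟨f a, rfl⟩
    set ι : (X 0 ⧸ LinearMap.range f) →ₗ[R] (I ⧸ LinearMap.range (ε0 ∘ₗ f)) :=
      Submodule.mapQ _ _ ε0 hle1 with hιdef
    set π : (I ⧸ LinearMap.range (ε0 ∘ₗ f)) →ₗ[R] (I ⧸ LinearMap.range ε0) :=
      Submodule.mapQ _ _ LinearMap.id hle2 with hπdef
    have hιinj : Function.Injective ι := by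
      rw [injective_iff_map_eq_zero]
      intro x hx
      obtain ⟨y, rfl⟩ := Submodule.Quotient.mk_surjective _ x
      rw [hιdef, Submodule.mapQ_apply, Submodule.Quotient.mk_eq_zero] at hx
      obtain ⟨a, ha⟩ := hx
      rw [Submodule.Quotient.mk_eq_zero]
      exact ⟨a, hε0 ha⟩
    have hexactιπ : Function.Exact ι π := by
      intro y
      obtain ⟨z, rfl⟩ := Submodule.Quotient.mk_surjective _ y
      constructor
      · intro hy
        rw [hπdef, Submodule.mapQ_apply, Submodule.Quotient.mk_eq_zero] at hy
        obtain ⟨x, hx⟩ := hy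
        refine ⟨Submodule.Quotient.mk x, ?_⟩
        rw [hιdef, Submodule.mapQ_apply]
        exact congrArg _ hx
      · rintro ⟨x, hx⟩
        obtain ⟨z, rfl⟩ := Submodule.Quotient.mk_surjective _ x
        rw [← hx, hιdef, Submodule.mapQ_apply, hπdef, Submodule.mapQ_apply,
          Submodule.Quotient.mk_eq_zero]
        exact ⟨z, rfl⟩
    have hπsurj : Function.Surjective π := by
      intro c
      obtain ⟨z, rfl⟩ := Submodule.Quotient.mk_surjective _ c
      exact ⟨Submodule.Quotient.mk z, by rw [hπdef, Submodule.mapQ_apply]; rfl⟩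
    have hM' : CMem R Φ m (I ⧸ LinearMap.range (ε0 ∘ₗ f)) :=
      cMem_ext R Φ m _ _ _ ι π hιinj hexactιπ hπsurj hK hC
    exact cMem_splice (ε0 ∘ₗ f) (hε0.comp hf) hIinj hIass hM'

end Aux

/-- The class `C^n_Φ` is closed under `n`-kernels: if `0 → M → X_0 → ⋯ → X_n` is exact
with each `X_i ∈ C^n_Φ` for `0 ≤ i ≤ n`, then `M ∈ C^n_Φ`. -/
theorem cMem_closed_under_nKernels (R : Type) [CommRing R] [IsNoetherianRing R]
    (Φ : Set (PrimeSpectrum R)) (n : ℕ)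
    (M : Type) [AddCommGroup M] [Module R M]
    (X : ℕ → Type) [∀ i, AddCommGroup (X i)] [∀ i, Module R (X i)]
    (f : M →ₗ[R] X 0) (d : ∀ i, X i →ₗ[R] X (i + 1))
    (hf : Function.Injective f)
    (h0 : 0 < n → Function.Exact f (d 0))
    (hex : ∀ i, i + 2 ≤ n → Function.Exact (d i) (d (i + 1)))
    (hX : ∀ i ≤ n, CMem R Φ n (X i)) :
    CMem R Φ n M :=
  cMem_main R Φ n M X f d hf h0 hex hX
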